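/- Let G be a group, n ≥ 3, E the set of idempotents of End F_n(G), and IG(E) the free idempotent generated monoid over E. Let u, v ∈ G and let a, b, c : {1,…,n} → G with a(1) = b(1) = c(1) = 1 and indices j, k, l ∈ {1,…,n} satisfy a(j) = u⁻¹, b(k) = v⁻¹ and c(l) = (uv)⁻¹. Then in IG(E): (ē_{11} ē_{a,j} ē_{11})(ē_{11} ē_{b,k} ē_{11}) = ē_{11} ē_{c,l} ē_{11}. (Writing w_u = ē_{11} ē_{a,j} ē_{11} for any choice with a(j) = u⁻¹, this says w_u w_v = w_{uv}.) -/

import Mathlib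

/-- An endomorphism of the rank-`n` free left `G`-act `F_n(G) = G × Fin n`
(the formal symbols `g x_i` are the pairs `(g, i)`), where the action is
`h • (g, i) = (h * g, i)` and equivariance says `(h • x) a = h • (x a)`. -/
structure ActEnd (G : Type*) [Group G] (n : ℕ) : Type _ where
  toFun : G × Fin n → G × Fin n
  equivariant : ∀ (h : G) (x : G × Fin n),
    toFun (h * x.1, x.2) = (h * (toFun x).1, (toFun x).2)

namespace ActEnd

variable {G : Type*} [Group G] {n : ℕ}

/-- Composition is written left-to-right: `x (a * b) = (x a) b`. -/
instance : Monoid (ActEnd G n) where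
  mul a b := ⟨fun x => b.toFun (a.toFun x), by
    intro h x
    try dsimp only
    rw [a.equivariant h x, b.equivariant]⟩
  one := ⟨id, fun _ _ => rfl⟩
  mul_assoc _ _ _ := rfl
  one_mul _ := rfl
  mul_one _ := rfl

@[simp] theorem mul_toFun (a b : ActEnd G n) (x : G × Fin n) :
    (a * b).toFun x = b.toFun (a.toFun x) := rfl

theorem ext' {a b : ActEnd G n} (h : a.toFun = b.toFun) : a = b := by
  cases a; cases b; cases h; rfl

/-- The rank of an endomorphism of `F_n(G)`: the number of indices `j` such
that `G x_j` meets the image. -/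
noncomputable def rank (a : ActEnd G n) : ℕ :=
  Nat.card {j : Fin n // ∃ x, (a.toFun x).2 = j}

end ActEnd

namespace ActEnd

variable {G : Type*} [Group G] {n : ℕ}

/-- The rank-1 idempotent `e_{a,j}` given by `(g x_t) e_{a,j} = (g * a t * (a j)⁻¹) x_j`.
Taking `a` constantly `1` gives `e_{1j}`, and also `j = 0` gives `e_{11}`
(indices `1, …, n` are realised as `Fin n`, with `1 ↦ 0`). -/
def eaj (a : Fin n → G) (j : Fin n) : ActEnd G n :=
  ⟨fun x => (x.1 * a x.2 * (a j)⁻¹, j), by intro h x; simp [mul_assoc]⟩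

theorem eaj_idem (a : Fin n → G) (j : Fin n) : eaj a j * eaj a j = eaj a j := by
  apply ext'
  funext x
  simp [eaj, mul_assoc]

/-- The map `a_g : g' x_t ↦ (g' * g) x_1`. -/
def aMap (g : G) (h0 : 0 < n) : ActEnd G n :=
  ⟨fun x => (x.1 * g, ⟨0, h0⟩), by intro h x; simp [mul_assoc]⟩

end ActEnd

/-- The principal left ideal `M a` of `a`. -/
def lIdeal {M : Type*} [Monoid M] (a : M) : Set M := Set.range fun m => m * a

/-- The principal right ideal `a M` of `a`. -/
def rIdeal {M : Type*} [Monoid M] (a : M) : Set M := Set.range fun m => a * m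

/-- The `H`-class of `e`: all elements that are both `L`- and `R`-related to `e`. -/
def hClass {M : Type*} [Monoid M] (e : M) : Set M :=
  {a | lIdeal a = lIdeal e ∧ rIdeal a = rIdeal e}

/-- The defining relation of the free idempotent generated monoid `IG(E)`:
`ē f̄ = (e f)‾` whenever `{e, f} ∩ {e f, f e} ≠ ∅`. -/
def igRel (M : Type*) [Monoid M] :
    FreeMonoid {e : M // e * e = e} → FreeMonoid {e : M // e * e = e} → Prop :=
  fun x y => ∃ e f g : {e : M // e * e = e},
    (e.1 * f.1 = e.1 ∨ e.1 * f.1 = f.1 ∨ f.1 * e.1 = e.1 ∨ f.1 * e.1 = f.1) ∧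
    e.1 * f.1 = g.1 ∧
    x = FreeMonoid.of e * FreeMonoid.of f ∧ y = FreeMonoid.of g

/-- The free idempotent generated monoid over the biordered set of idempotents
of `M`: the presented monoid with generators `ē` for each idempotent `e` and
relations `ē f̄ = (e f)‾` whenever `{e, f} ∩ {e f, f e} ≠ ∅`. -/
abbrev IG (M : Type*) [Monoid M] : Type _ := (conGen (igRel M)).Quotient

/-- The generator `ē` of `IG(E)` corresponding to the idempotent `e`. -/
def ebar {M : Type*} [Monoid M] (e : {e : M // e * e = e}) : IG M :=
  (conGen (igRel M)).mk' (FreeMonoid.of e)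

/-- `ē_{a,j}` as an element of `IG(E)` for `E` the idempotents of `End F_n(G)`. -/
def igE {G : Type*} [Group G] {n : ℕ} (a : Fin n → G) (j : Fin n) : IG (ActEnd G n) :=
  ebar ⟨ActEnd.eaj a j, ActEnd.eaj_idem a j⟩

/-- `ē_{11}` as an element of `IG(E)`. -/
def ig11 {G : Type*} [Group G] {n : ℕ} (h0 : 0 < n) : IG (ActEnd G n) :=
  igE (fun _ => (1 : G)) ⟨0, h0⟩

section Aux

variable {M : Type*} [Monoid M]

lemma ebar_mul_of (e f g : {e : M // e * e = e})
    (hb : e.1 * f.1 = e.1 ∨ e.1 * f.1 = f.1 ∨ f.1 * e.1 = e.1 ∨ f.1 * e.1 = f.1)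
    (hg : e.1 * f.1 = g.1) :
    ebar e * ebar f = ebar g := by
  have h : (conGen (igRel M)) (FreeMonoid.of e * FreeMonoid.of f) (FreeMonoid.of g) :=
    ConGen.Rel.of _ _ ⟨e, f, g, hb, hg, rfl, rfl⟩
  exact (Con.eq _).mpr h

end Aux

section Moves

variable {G : Type*} [Group G] {n : ℕ}

open ActEnd

lemma eaj_eq' {a b : Fin n → G} {j : Fin n}
    (h : ∀ t, a t * (a j)⁻¹ = b t * (b j)⁻¹) : eaj a j = eaj b j := by
  apply ext'
  funext x
  show (x.1 * a x.2 * (a j)⁻¹, j) = (x.1 * b x.2 * (b j)⁻¹, j)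
  rw [mul_assoc, h x.2, ← mul_assoc]

lemma igE_congr {a b : Fin n → G} {j k : Fin n} (h : eaj a j = eaj b k) :
    igE a j = igE b k := by
  unfold igE
  exact congrArg _ (Subtype.ext h)

lemma eajA (a b : Fin n → G) (r : Fin n) : eaj a r * eaj b r = eaj a r := by
  apply ext'; funext x; simp [eaj, mul_assoc]

lemma eajB (a : Fin n → G) (j k : Fin n) : eaj a j * eaj a k = eaj a k := by
  apply ext'; funext x; simp [eaj, mul_assoc]

lemma igA (a b : Fin n → G) (r : Fin n) : igE a r * igE b r = igE a r :=
  ebar_mul_of _ _ _ (Or.inl (eajA a b r)) (eajA a b r)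

lemma igB (a : Fin n → G) (j k : Fin n) : igE a j * igE a k = igE a k :=
  ebar_mul_of _ _ _ (Or.inr (Or.inl (eajB a j k))) (eajB a j k)

def kmap (π : Fin n → Fin n) (γ : Fin n → G) : ActEnd G n :=
  ⟨fun x => (x.1 * γ x.2, π x.2), by intro h x; simp [mul_assoc]⟩

variable {π : Fin n → Fin n} {γ : Fin n → G}

lemma kmap_idem (hππ : ∀ t, π (π t) = π t) (hγπ : ∀ t, γ (π t) = 1) :
    kmap π γ * kmap π γ = kmap π γ := by
  apply ActEnd.ext'; funext x; simp [kmap, hππ, hγπ, mul_assoc]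

lemma eaj_mul_kmap (a : Fin n → G) (r : Fin n) (hr : π r = r) (hγr : γ r = 1) :
    eaj a r * kmap π γ = eaj a r := by
  apply ActEnd.ext'; funext x; simp [kmap, eaj, hr, hγr]

lemma kmap_mul_eaj (y : Fin n → G) (s : Fin n) (hs : π s = s) (hγs : γ s = 1) :
    kmap π γ * eaj y s = eaj (fun t => γ t * y (π t)) s := by
  apply ActEnd.ext'; funext x; simp [kmap, eaj, hs, hγs, mul_assoc]

lemma kmap_mul_eaj_self (z : Fin n → G) (s : Fin n) (hz : ∀ t, γ t * z (π t) = z t) :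
    kmap π γ * eaj z s = eaj z s := by
  apply ActEnd.ext'; funext x
  show (x.1 * γ x.2 * z (π x.2) * (z s)⁻¹, s) = (x.1 * z x.2 * (z s)⁻¹, s)
  rw [mul_assoc x.1, hz x.2]

lemma eaj_mul_kmap_compat (x : Fin n → G) (r : Fin n) (hx : ∀ t, γ t * x (π t) = x t) :
    eaj x r * kmap π γ = eaj x (π r) := by
  apply ActEnd.ext'; funext p
  show (p.1 * x p.2 * (x r)⁻¹ * γ r, π r) = (p.1 * x p.2 * (x (π r))⁻¹, π r)
  have hγr : γ r = x r * (x (π r))⁻¹ := eq_mul_inv_of_mul_eq (hx r)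
  rw [hγr, mul_assoc (p.1 * x p.2), inv_mul_cancel_left]

lemma igRgen (x y : Fin n → G) (r s : Fin n)
    (hππ : ∀ t, π (π t) = π t) (hγπ : ∀ t, γ (π t) = 1)
    (hr : π r = r) (hγr : γ r = 1) (hs : π s = s) (hγs : γ s = 1) :
    igE x r * igE y s = igE x r * igE (fun t => γ t * y (π t)) s := by
  have h1 : igE x r * ebar ⟨kmap π γ, kmap_idem hππ hγπ⟩ = igE x r :=
    ebar_mul_of _ _ _ (Or.inl (eaj_mul_kmap x r hr hγr)) (eaj_mul_kmap x r hr hγr)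
  have h2 : ebar ⟨kmap π γ, kmap_idem hππ hγπ⟩ * igE y s = igE (fun t => γ t * y (π t)) s :=
    ebar_mul_of _ _ _ (Or.inr (Or.inr (Or.inr (eaj_mul_kmap y s hs hγs))))
      (kmap_mul_eaj y s hs hγs)
  calc igE x r * igE y s = igE x r * ebar ⟨kmap π γ, kmap_idem hππ hγπ⟩ * igE y s := by
        rw [h1]
    _ = igE x r * (ebar ⟨kmap π γ, kmap_idem hππ hγπ⟩ * igE y s) := mul_assoc _ _ _
    _ = _ := by rw [h2]

lemma igR (x y y' : Fin n → G) (r s : Fin n) (h1 : y' r = y r) (h2 : y' s = y s) :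
    igE x r * igE y s = igE x r * igE y' s := by
  classical
  have key := igRgen (π := fun t => if t = r ∨ t = s then t else s)
    (γ := fun t => y' t * (y (if t = r ∨ t = s then t else s))⁻¹) x y r s
    (by intro t; by_cases h : t = r ∨ t = s <;> simp [h])
    (by intro t
        by_cases h : t = r ∨ t = s
        · simp only [if_pos h]
          rcases h with h | h <;> subst h <;> simp [h1, h2]
        · simp only [if_neg h]
          simp [h2])
    (by simp) (by simp [h1]) (by simp) (by simp [h2])
  refine key.trans ?_
  refine congrArg (fun f => igE x r * igE f s) (funext fun t => ?_)
  exact inv_mul_cancel_right _ _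

lemma igLgen (x y : Fin n → G) (r s : Fin n)
    (hππ : ∀ t, π (π t) = π t)
    (hx : ∀ t, x t * (x (π t))⁻¹ = y t * (y (π t))⁻¹) :
    igE x r * igE y s = igE x (π r) * igE y s := by
  set γ' : Fin n → G := fun t => x t * (x (π t))⁻¹ with hγ'
  have hγπ : ∀ t, γ' (π t) = 1 := by
    intro t; simp only [hγ']; rw [hππ t]; simp
  have hcx : ∀ t, γ' t * x (π t) = x t := by
    intro t; simp only [hγ']; exact inv_mul_cancel_right _ _
  have hcy : ∀ t, γ' t * y (π t) = y t := by
    intro t; simp only [hγ']; rw [hx t]; exact inv_mul_cancel_right _ _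
  have h1 : ebar ⟨kmap π γ', kmap_idem hππ hγπ⟩ * igE y s = igE y s :=
    ebar_mul_of _ _ _ (Or.inr (Or.inl (kmap_mul_eaj_self y s hcy)))
      (kmap_mul_eaj_self y s hcy)
  have h2 : igE x r * ebar ⟨kmap π γ', kmap_idem hππ hγπ⟩ = igE x (π r) :=
    ebar_mul_of _ _ _ (Or.inr (Or.inr (Or.inl (kmap_mul_eaj_self x r hcx))))
      (eaj_mul_kmap_compat x r hcx)
  calc igE x r * igE y s
      = igE x r * (ebar ⟨kmap π γ', kmap_idem hππ hγπ⟩ * igE y s) := by rw [h1]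
    _ = igE x r * ebar ⟨kmap π γ', kmap_idem hππ hγπ⟩ * igE y s := (mul_assoc _ _ _).symm
    _ = _ := by rw [h2]

lemma igL (x y : Fin n → G) (i jj s : Fin n)
    (hcond : x i * (x jj)⁻¹ = y i * (y jj)⁻¹) :
    igE x i * igE y s = igE x jj * igE y s := by
  classical
  have key := igLgen (π := fun t => if t = i then jj else t) x y i s
    (by intro t; by_cases h : t = i <;> simp [h])
    (by intro t
        by_cases h : t = i
        · subst h; simpa using hcond
        · simp [h])
  simpa using key

end Moves


section Sandwich

variable {G : Type*} [Group G] {n : ℕ}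

open ActEnd

lemma sandwich (h0 : 0 < n) (b c : Fin n → G) (k l : Fin n)
    (hyp : b ⟨0, h0⟩ * (b k)⁻¹ = c ⟨0, h0⟩ * (c l)⁻¹) :
    igE (fun _ => (1:G)) ⟨0, h0⟩ * igE b k * igE (fun _ => (1:G)) ⟨0, h0⟩
      = igE (fun _ => (1:G)) ⟨0, h0⟩ * igE c l * igE (fun _ => (1:G)) ⟨0, h0⟩ := by
  classical
  have S0 : ∀ d : Fin n → G,
      igE (fun _ => (1:G)) ⟨0, h0⟩ * igE d ⟨0, h0⟩ * igE (fun _ => (1:G)) ⟨0, h0⟩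
        = igE (fun _ => (1:G)) ⟨0, h0⟩ := by
    intro d; rw [igA, igA]
  have S1 : ∀ (d : Fin n → G) (m : Fin n), d ⟨0, h0⟩ = d m →
      igE (fun _ => (1:G)) ⟨0, h0⟩ * igE d m * igE (fun _ => (1:G)) ⟨0, h0⟩
        = igE (fun _ => (1:G)) ⟨0, h0⟩ := by
    intro d m hd
    have e1 : igE (fun _ => (1:G)) ⟨0, h0⟩ * igE d m
        = igE (fun _ => (1:G)) ⟨0, h0⟩ * igE (fun _ => d ⟨0, h0⟩) m :=
      igR _ d (fun _ => d ⟨0, h0⟩) ⟨0, h0⟩ m rfl hd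
    have e2 : igE (fun _ : Fin n => d ⟨0, h0⟩) m = igE (fun _ => (1:G)) m :=
      igE_congr (eaj_eq' (fun t => by simp))
    rw [e1, e2, mul_assoc, igB, igA]
  by_cases hk : k = ⟨0, h0⟩
  · subst hk
    have hcc : c ⟨0, h0⟩ = c l := by
      have h1 : c ⟨0, h0⟩ * (c l)⁻¹ = 1 := by rw [← hyp]; simp
      rwa [mul_inv_eq_one] at h1
    by_cases hl : l = ⟨0, h0⟩
    · subst hl; rw [S0, S0]
    · rw [S0, S1 c l hcc]
  · by_cases hl : l = ⟨0, h0⟩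
    · subst hl
      have hbb : b ⟨0, h0⟩ = b k := by
        have h1 : b ⟨0, h0⟩ * (b k)⁻¹ = 1 := by rw [hyp]; simp
        rwa [mul_inv_eq_one] at h1
      rw [S1 b k hbb, S0]
    · set b2 : Fin n → G := fun t => if t = ⟨0, h0⟩ then b ⟨0, h0⟩ else
        if t = k then b k else if t = l then b k else 1 with hb2
      set b3 : Fin n → G := fun t => if t = ⟨0, h0⟩ then b ⟨0, h0⟩ else
        if t = l then b k else c t * (c ⟨0, h0⟩)⁻¹ * b ⟨0, h0⟩ with hb3
      have hb2f0 : b2 ⟨0, h0⟩ = b ⟨0, h0⟩ := by simp [hb2]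
      have hb2k : b2 k = b k := by simp [hb2, hk]
      have hb2l : b2 l = b k := by
        by_cases h : l = k
        · simp [hb2, h, hk]
        · simp [hb2, hl, h]
      have hb3f0 : b3 ⟨0, h0⟩ = b ⟨0, h0⟩ := by simp [hb3]
      have hb3l : b3 l = b k := by simp [hb3, hl]
      have e1 : igE (fun _ => (1:G)) ⟨0, h0⟩ * igE b k
          = igE (fun _ => (1:G)) ⟨0, h0⟩ * igE b2 k :=
        igR _ b b2 ⟨0, h0⟩ k hb2f0 hb2k
      have e2 : igE b2 k * igE (fun _ => (1:G)) ⟨0, h0⟩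
          = igE b2 l * igE (fun _ => (1:G)) ⟨0, h0⟩ :=
        igL b2 _ k l ⟨0, h0⟩ (by rw [hb2k, hb2l]; simp)
      have e3 : igE (fun _ => (1:G)) ⟨0, h0⟩ * igE b2 l
          = igE (fun _ => (1:G)) ⟨0, h0⟩ * igE b3 l :=
        igR _ b2 b3 ⟨0, h0⟩ l (by rw [hb3f0, hb2f0]) (by rw [hb3l, hb2l])
      have e4 : igE b3 l = igE c l := igE_congr (eaj_eq' (fun t => by
        rw [hb3l]
        by_cases ht0 : t = ⟨0, h0⟩
        · subst ht0; rw [hb3f0]; exact hyp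
        · by_cases htl : t = l
          · subst htl; rw [hb3l]; simp
          · have hb3t : b3 t = c t * (c ⟨0, h0⟩)⁻¹ * b ⟨0, h0⟩ := by
              simp [hb3, ht0, htl]
            rw [hb3t, mul_assoc (c t * (c ⟨0, h0⟩)⁻¹), hyp, ← mul_assoc,
              inv_mul_cancel_right]))
      rw [e1, mul_assoc, e2, ← mul_assoc, e3, e4]

end Sandwich

/-- Writing `w_u = ē_{11} ē_{a,j} ē_{11}` for any choice with `a j = u⁻¹`,
we have `w_u w_v = w_{u v}` in `IG(E)`. -/
theorem stmt17 {G : Type*} [Group G] {n : ℕ} (hn : 3 ≤ n) (u v : G)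
    (a b c : Fin n → G) (ha : a ⟨0, by omega⟩ = 1) (hb : b ⟨0, by omega⟩ = 1)
    (hc : c ⟨0, by omega⟩ = 1) (j k l : Fin n)
    (hu : a j = u⁻¹) (hv : b k = v⁻¹) (huv : c l = (u * v)⁻¹) :
    (ig11 (G := G) (n := n) (by omega) * igE a j * ig11 (G := G) (n := n) (by omega)) *
        (ig11 (G := G) (n := n) (by omega) * igE b k * ig11 (G := G) (n := n) (by omega)) =
      ig11 (G := G) (n := n) (by omega) * igE c l * ig11 (G := G) (n := n) (by omega) := by
  classical
  have h0 : 0 < n := by omega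
  have h1 : 1 < n := by omega
  have h2 : 2 < n := by omega
  have hne01 : (⟨0, h0⟩ : Fin n) ≠ ⟨1, h1⟩ := Fin.ne_of_val_ne (by norm_num)
  have hne02 : (⟨0, h0⟩ : Fin n) ≠ ⟨2, h2⟩ := Fin.ne_of_val_ne (by norm_num)
  have hne12 : (⟨1, h1⟩ : Fin n) ≠ ⟨2, h2⟩ := Fin.ne_of_val_ne (by norm_num)
  have ha0 : a ⟨0, h0⟩ = 1 := ha
  have hb0 : b ⟨0, h0⟩ = 1 := hb
  have hc0 : c ⟨0, h0⟩ = 1 := hc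
  set astar : Fin n → G := fun t => if t = ⟨1, h1⟩ then u⁻¹ else 1 with hastar
  set bstar : Fin n → G := fun t => if t = ⟨2, h2⟩ then v⁻¹ else 1 with hbstar
  set b6 : Fin n → G := fun t => if t = ⟨0, h0⟩ then u else if t = ⟨2, h2⟩ then v⁻¹ else 1
    with hb6
  have Sa : igE (fun _ => (1:G)) ⟨0, h0⟩ * igE a j * igE (fun _ => (1:G)) ⟨0, h0⟩
      = igE (fun _ => (1:G)) ⟨0, h0⟩ * igE astar ⟨1, h1⟩ * igE (fun _ => (1:G)) ⟨0, h0⟩ :=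
    sandwich h0 a astar j ⟨1, h1⟩ (by rw [ha0, hu]; simp [hastar, hne01])
  have Sb : igE (fun _ => (1:G)) ⟨0, h0⟩ * igE b k * igE (fun _ => (1:G)) ⟨0, h0⟩
      = igE (fun _ => (1:G)) ⟨0, h0⟩ * igE bstar ⟨2, h2⟩ * igE (fun _ => (1:G)) ⟨0, h0⟩ :=
    sandwich h0 b bstar k ⟨2, h2⟩ (by rw [hb0, hv]; simp [hbstar, hne02])
  have Sc : igE (fun _ => (1:G)) ⟨0, h0⟩ * igE b6 ⟨2, h2⟩ * igE (fun _ => (1:G)) ⟨0, h0⟩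
      = igE (fun _ => (1:G)) ⟨0, h0⟩ * igE c l * igE (fun _ => (1:G)) ⟨0, h0⟩ :=
    sandwich h0 b6 c ⟨2, h2⟩ l (by
      rw [hc0, huv]
      simp [hb6, hne02, hne02.symm, mul_inv_rev])
  show igE (fun _ => (1:G)) ⟨0, h0⟩ * igE a j * igE (fun _ => (1:G)) ⟨0, h0⟩ *
      (igE (fun _ => (1:G)) ⟨0, h0⟩ * igE b k * igE (fun _ => (1:G)) ⟨0, h0⟩) =
      igE (fun _ => (1:G)) ⟨0, h0⟩ * igE c l * igE (fun _ => (1:G)) ⟨0, h0⟩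
  rw [Sa, Sb]
  have t1 : igE (fun _ => (1:G)) ⟨0, h0⟩ * igE (fun _ => (1:G)) ⟨0, h0⟩
      = igE (fun _ => (1:G)) ⟨0, h0⟩ := igA _ _ _
  have d1 : igE (fun _ => (1:G)) ⟨0, h0⟩ * igE bstar ⟨2, h2⟩
      = igE (fun _ => (1:G)) ⟨1, h1⟩ * igE bstar ⟨2, h2⟩ :=
    igL _ bstar ⟨0, h0⟩ ⟨1, h1⟩ ⟨2, h2⟩ (by simp [hbstar, hne02, hne12])
  have d2 : igE astar ⟨1, h1⟩ * igE (fun _ => (1:G)) ⟨1, h1⟩ = igE astar ⟨1, h1⟩ :=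
    igA _ _ _
  have d3 : igE astar ⟨1, h1⟩ * igE bstar ⟨2, h2⟩ = igE astar ⟨1, h1⟩ * igE b6 ⟨2, h2⟩ :=
    igR astar bstar b6 ⟨1, h1⟩ ⟨2, h2⟩
      (by simp [hb6, hbstar, hne01.symm, hne12]) (by simp [hb6, hbstar, hne02.symm])
  have d4 : igE astar ⟨1, h1⟩ * igE b6 ⟨2, h2⟩ = igE astar ⟨0, h0⟩ * igE b6 ⟨2, h2⟩ :=
    igL astar b6 ⟨1, h1⟩ ⟨0, h0⟩ ⟨2, h2⟩
      (by simp [hastar, hb6, hne01, hne01.symm, hne12])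
  have d5 : igE (fun _ => (1:G)) ⟨0, h0⟩ * igE astar ⟨0, h0⟩
      = igE (fun _ => (1:G)) ⟨0, h0⟩ := igA _ _ _
  calc igE (fun _ => (1:G)) ⟨0, h0⟩ * igE astar ⟨1, h1⟩ * igE (fun _ => (1:G)) ⟨0, h0⟩ *
        (igE (fun _ => (1:G)) ⟨0, h0⟩ * igE bstar ⟨2, h2⟩ * igE (fun _ => (1:G)) ⟨0, h0⟩)
      = igE (fun _ => (1:G)) ⟨0, h0⟩ * (igE astar ⟨1, h1⟩ *
          ((igE (fun _ => (1:G)) ⟨0, h0⟩ * igE (fun _ => (1:G)) ⟨0, h0⟩) *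
            (igE bstar ⟨2, h2⟩ * igE (fun _ => (1:G)) ⟨0, h0⟩))) := by
        simp only [mul_assoc]
    _ = igE (fun _ => (1:G)) ⟨0, h0⟩ * (igE astar ⟨1, h1⟩ *
          ((igE (fun _ => (1:G)) ⟨0, h0⟩ * igE bstar ⟨2, h2⟩) *
            igE (fun _ => (1:G)) ⟨0, h0⟩)) := by
        rw [t1]; simp only [mul_assoc]
    _ = igE (fun _ => (1:G)) ⟨0, h0⟩ * ((igE astar ⟨1, h1⟩ *
          igE (fun _ => (1:G)) ⟨1, h1⟩) * (igE bstar ⟨2, h2⟩ *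
            igE (fun _ => (1:G)) ⟨0, h0⟩)) := by
        rw [d1]; simp only [mul_assoc]
    _ = igE (fun _ => (1:G)) ⟨0, h0⟩ * ((igE astar ⟨1, h1⟩ * igE b6 ⟨2, h2⟩) *
          igE (fun _ => (1:G)) ⟨0, h0⟩) := by
        rw [d2, ← mul_assoc (igE astar ⟨1, h1⟩), d3]
    _ = igE (fun _ => (1:G)) ⟨0, h0⟩ * ((igE astar ⟨0, h0⟩ * igE b6 ⟨2, h2⟩) *
          igE (fun _ => (1:G)) ⟨0, h0⟩) := by rw [d4]
    _ = (igE (fun _ => (1:G)) ⟨0, h0⟩ * igE astar ⟨0, h0⟩) * (igE b6 ⟨2, h2⟩ *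
          igE (fun _ => (1:G)) ⟨0, h0⟩) := by simp only [mul_assoc]
    _ = igE (fun _ => (1:G)) ⟨0, h0⟩ * igE b6 ⟨2, h2⟩ * igE (fun _ => (1:G)) ⟨0, h0⟩ := by
        rw [d5, mul_assoc]
    _ = igE (fun _ => (1:G)) ⟨0, h0⟩ * igE c l * igE (fun _ => (1:G)) ⟨0, h0⟩ := Sc
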